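/- Define Ψ_K(a,b) := ∫₀¹ (p·(b ∧ K) - (1-p)·(a ∧ K))·((1-p)a - pb) dp for a,b ≥ 0 and K > 0. If X, Y are independent exponential random variables each with mean ρ > 0, then E[Ψ_K(X,Y)] = (ρ·m₁^K(ρ))/3 - (2/3)·m_{1,1}^K(ρ), where m₁^K(ρ) = E[X ∧ K] and m_{1,1}^K(ρ) = E[X·(X ∧ K)]. -/

import Mathlib

open MeasureTheory Real

private lemma pInt_aux (A B x y : ℝ) :
    (∫ p in (0:ℝ)..1, (p * A - (1 - p) * B) * ((1 - p) * x - p * y))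
      = (A * x + B * y) / 6 - (A * y + B * x) / 3 := by
  have h : ∀ p : ℝ, (p * A - (1 - p) * B) * ((1 - p) * x - p * y)
      = (-(B*x)) + (A*x + 2*B*x + B*y) * p + (-(A*x + A*y + B*x + B*y)) * p^2 := by
    intro p; ring
  simp_rw [h]
  rw [intervalIntegral.integral_add, intervalIntegral.integral_add,
    intervalIntegral.integral_const, intervalIntegral.integral_const_mul,
    intervalIntegral.integral_const_mul]
  · simp [integral_id, integral_pow]
    ring
  all_goals
    apply Continuous.intervalIntegrable
    continuity

private lemma expDens_int (ρ : ℝ) (hρ : 0 < ρ) :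
    IntegrableOn (fun x : ℝ => ρ⁻¹ * Real.exp (-x / ρ)) (Set.Ioi 0) := by
  have := (exp_neg_integrableOn_Ioi 0 (show (0:ℝ) < ρ⁻¹ by positivity)).const_mul ρ⁻¹
  refine IntegrableOn.congr_fun this (fun x _ => ?_) measurableSet_Ioi
  rw [neg_mul, neg_div, div_eq_inv_mul]

private lemma xExpDens_int (ρ : ℝ) (hρ : 0 < ρ) :
    IntegrableOn (fun x : ℝ => x * (ρ⁻¹ * Real.exp (-x / ρ))) (Set.Ioi 0) := by
  have h := (integrableOn_rpow_mul_exp_neg_mul_rpow (s := 1) (p := 1) (b := ρ⁻¹)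
    (by norm_num) one_pos (by positivity)).const_mul ρ⁻¹
  refine IntegrableOn.congr_fun h (fun x _ => ?_) measurableSet_Ioi
  simp only [rpow_one]
  rw [neg_mul, neg_div, div_eq_inv_mul]; ring

private lemma minDens_int (ρ K : ℝ) (hρ : 0 < ρ) (hK : 0 < K) :
    IntegrableOn (fun x : ℝ => min x K * (ρ⁻¹ * Real.exp (-x / ρ))) (Set.Ioi 0) := by
  refine Integrable.mono' ((expDens_int ρ hρ).const_mul K) ?_ ?_
  · exact ((continuous_id.min continuous_const).mul
      (continuous_const.mul ((continuous_id.neg.div_const ρ).rexp))).aestronglyMeasurable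
  · filter_upwards [ae_restrict_mem measurableSet_Ioi] with x hx
    have hd : 0 < ρ⁻¹ * Real.exp (-x / ρ) := by positivity
    have h1 : 0 ≤ min x K := le_min (le_of_lt hx) hK.le
    rw [Real.norm_eq_abs, abs_of_nonneg (mul_nonneg h1 hd.le)]
    exact mul_le_mul_of_nonneg_right (min_le_right _ _) hd.le

private lemma xminDens_int (ρ K : ℝ) (hρ : 0 < ρ) (hK : 0 < K) :
    IntegrableOn (fun x : ℝ => x * min x K * (ρ⁻¹ * Real.exp (-x / ρ))) (Set.Ioi 0) := by
  refine Integrable.mono' ((xExpDens_int ρ hρ).const_mul K) ?_ ?_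
  · exact ((continuous_id.mul (continuous_id.min continuous_const)).mul
      (continuous_const.mul ((continuous_id.neg.div_const ρ).rexp))).aestronglyMeasurable
  · filter_upwards [ae_restrict_mem measurableSet_Ioi] with x hx
    have hd : 0 < ρ⁻¹ * Real.exp (-x / ρ) := by positivity
    have hx0 : (0:ℝ) < x := hx
    have h1 : 0 ≤ min x K := le_min hx0.le hK.le
    rw [Real.norm_eq_abs, abs_of_nonneg (mul_nonneg (mul_nonneg hx0.le h1) hd.le)]
    have : x * min x K ≤ x * K := mul_le_mul_of_nonneg_left (min_le_right _ _) hx0.le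
    nlinarith

private lemma expDens_total (ρ : ℝ) (hρ : 0 < ρ) :
    ∫ x in Set.Ioi (0:ℝ), ρ⁻¹ * Real.exp (-x / ρ) = 1 := by
  have h := Real.integral_rpow_mul_exp_neg_mul_Ioi (a := 1) (r := ρ⁻¹) one_pos (by positivity)
  simp only [sub_self, rpow_zero, one_mul, Real.Gamma_one, mul_one, rpow_one, one_div] at h
  rw [show (fun x : ℝ => ρ⁻¹ * Real.exp (-x / ρ)) = fun x : ℝ => ρ⁻¹ * Real.exp (-(ρ⁻¹ * x)) by
    funext x; rw [neg_div, div_eq_inv_mul]]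
  rw [MeasureTheory.integral_const_mul, h, inv_inv, inv_mul_cancel₀ hρ.ne']

private lemma xExpDens_total (ρ : ℝ) (hρ : 0 < ρ) :
    ∫ x in Set.Ioi (0:ℝ), x * (ρ⁻¹ * Real.exp (-x / ρ)) = ρ := by
  have h := Real.integral_rpow_mul_exp_neg_mul_Ioi (a := 2) (r := ρ⁻¹) two_pos (by positivity)
  have h2 : (2:ℝ) - 1 = 1 := by norm_num
  simp only [h2, rpow_one, Real.Gamma_two, mul_one, one_div, inv_inv] at h
  rw [show (fun x : ℝ => x * (ρ⁻¹ * Real.exp (-x / ρ)))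
      = fun x : ℝ => ρ⁻¹ * (x * Real.exp (-(ρ⁻¹ * x))) by
    funext x; rw [neg_div, div_eq_inv_mul]; ring]
  rw [MeasureTheory.integral_const_mul, h]
  field_simp
  simp [Real.rpow_two]

/-- The local-equilibrium average of the drift local function `Ψ_K`:
if `X, Y` are i.i.d. exponential with mean `ρ` (density `ρ⁻¹e^{-x/ρ}` on `(0,∞)`), then
`E[Ψ_K(X,Y)] = ρ·m₁^K(ρ)/3 - (2/3)·m_{1,1}^K(ρ)`. -/
theorem average_drift_local_function (ρ K : ℝ) (hρ : 0 < ρ) (hK : 0 < K) :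
    (∫ x in Set.Ioi (0:ℝ), ∫ y in Set.Ioi (0:ℝ),
        (∫ p in (0:ℝ)..1, (p * min y K - (1 - p) * min x K) * ((1 - p) * x - p * y))
          * (ρ⁻¹ * Real.exp (-x / ρ)) * (ρ⁻¹ * Real.exp (-y / ρ)))
      = ρ * (∫ x in Set.Ioi (0:ℝ), min x K * (ρ⁻¹ * Real.exp (-x / ρ))) / 3
        - (2 / 3) * (∫ x in Set.Ioi (0:ℝ), x * min x K * (ρ⁻¹ * Real.exp (-x / ρ))) := by
  have hd := expDens_int ρ hρ
  have hxd := xExpDens_int ρ hρ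
  have hmind := minDens_int ρ K hρ hK
  have hxmind := xminDens_int ρ K hρ hK
  set I1 := ∫ x in Set.Ioi (0:ℝ), min x K * (ρ⁻¹ * Real.exp (-x / ρ)) with hI1
  set I2 := ∫ x in Set.Ioi (0:ℝ), x * min x K * (ρ⁻¹ * Real.exp (-x / ρ)) with hI2
  have hA : ∀ x y : ℝ,
      (∫ p in (0:ℝ)..1, (p * min y K - (1 - p) * min x K) * ((1 - p) * x - p * y))
        = (min y K * x + min x K * y) / 6 - (min y K * y + min x K * x) / 3 :=
    fun x y => pInt_aux _ _ _ _
  simp_rw [hA]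
  have hinner : ∀ x : ℝ, (∫ y in Set.Ioi (0:ℝ),
      ((min y K * x + min x K * y) / 6 - (min y K * y + min x K * x) / 3)
        * (ρ⁻¹ * Real.exp (-x / ρ)) * (ρ⁻¹ * Real.exp (-y / ρ)))
      = (ρ⁻¹ * Real.exp (-x / ρ)) *
          (x / 6 * I1 + min x K / 6 * ρ - I2 / 3 - min x K * x / 3) := by
    intro x
    have e : ∀ y : ℝ, ((min y K * x + min x K * y) / 6 - (min y K * y + min x K * x) / 3)
          * (ρ⁻¹ * Real.exp (-x / ρ)) * (ρ⁻¹ * Real.exp (-y / ρ))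
        = (ρ⁻¹ * Real.exp (-x / ρ)) *
            ((x / 6) * (min y K * (ρ⁻¹ * Real.exp (-y / ρ)))
             + (min x K / 6) * (y * (ρ⁻¹ * Real.exp (-y / ρ)))
             + (-(1/3)) * (y * min y K * (ρ⁻¹ * Real.exp (-y / ρ)))
             + (-(min x K * x / 3)) * (ρ⁻¹ * Real.exp (-y / ρ))) := by
      intro y; ring
    simp_rw [e]
    rw [MeasureTheory.integral_const_mul]
    have g1 := hmind.const_mul (x / 6)
    have g2 := hxd.const_mul (min x K / 6)
    have g3 := hxmind.const_mul (-(1/3) : ℝ)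
    have g4 := hd.const_mul (-(min x K * x / 3))
    have g12 : Integrable (fun y : ℝ => (x / 6) * (min y K * (ρ⁻¹ * Real.exp (-y / ρ)))
        + (min x K / 6) * (y * (ρ⁻¹ * Real.exp (-y / ρ)))) (volume.restrict (Set.Ioi 0)) :=
      g1.add g2
    have g123 : Integrable (fun y : ℝ => (x / 6) * (min y K * (ρ⁻¹ * Real.exp (-y / ρ)))
        + (min x K / 6) * (y * (ρ⁻¹ * Real.exp (-y / ρ)))
        + (-(1/3)) * (y * min y K * (ρ⁻¹ * Real.exp (-y / ρ)))) (volume.restrict (Set.Ioi 0)) :=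
      g12.add g3
    have t1 : (∫ y in Set.Ioi (0:ℝ), (x / 6) * (min y K * (ρ⁻¹ * Real.exp (-y / ρ))))
        = (x / 6) * I1 := by
      rw [MeasureTheory.integral_const_mul, ← hI1]
    have t2 : (∫ y in Set.Ioi (0:ℝ), (min x K / 6) * (y * (ρ⁻¹ * Real.exp (-y / ρ))))
        = (min x K / 6) * ρ := by
      rw [MeasureTheory.integral_const_mul, xExpDens_total ρ hρ]
    have t3 : (∫ y in Set.Ioi (0:ℝ), (-(1/3) : ℝ) * (y * min y K * (ρ⁻¹ * Real.exp (-y / ρ))))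
        = (-(1/3) : ℝ) * I2 := by
      rw [MeasureTheory.integral_const_mul, ← hI2]
    have t4 : (∫ y in Set.Ioi (0:ℝ), (-(min x K * x / 3)) * (ρ⁻¹ * Real.exp (-y / ρ)))
        = -(min x K * x / 3) := by
      rw [MeasureTheory.integral_const_mul, expDens_total ρ hρ, mul_one]
    rw [MeasureTheory.integral_add g123 g4,
        MeasureTheory.integral_add g12 g3,
        MeasureTheory.integral_add g1 g2, t1, t2, t3, t4]
    ring
  simp_rw [hinner]
  have e2 : ∀ x : ℝ, (ρ⁻¹ * Real.exp (-x / ρ)) *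
        (x / 6 * I1 + min x K / 6 * ρ - I2 / 3 - min x K * x / 3)
      = (I1 / 6) * (x * (ρ⁻¹ * Real.exp (-x / ρ)))
        + (ρ / 6) * (min x K * (ρ⁻¹ * Real.exp (-x / ρ)))
        + (-(I2 / 3)) * (ρ⁻¹ * Real.exp (-x / ρ))
        + (-(1/3)) * (x * min x K * (ρ⁻¹ * Real.exp (-x / ρ))) := by
    intro x; ring
  simp_rw [e2]
  have g1 := hxd.const_mul (I1 / 6)
  have g2 := hmind.const_mul (ρ / 6)
  have g3 := hd.const_mul (-(I2 / 3))
  have g4 := hxmind.const_mul (-(1/3) : ℝ)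
  have g12 : Integrable (fun x : ℝ => (I1 / 6) * (x * (ρ⁻¹ * Real.exp (-x / ρ)))
      + (ρ / 6) * (min x K * (ρ⁻¹ * Real.exp (-x / ρ)))) (volume.restrict (Set.Ioi 0)) :=
    g1.add g2
  have g123 : Integrable (fun x : ℝ => (I1 / 6) * (x * (ρ⁻¹ * Real.exp (-x / ρ)))
      + (ρ / 6) * (min x K * (ρ⁻¹ * Real.exp (-x / ρ)))
      + (-(I2 / 3)) * (ρ⁻¹ * Real.exp (-x / ρ))) (volume.restrict (Set.Ioi 0)) :=
    g12.add g3
  have t1 : (∫ x in Set.Ioi (0:ℝ), (I1 / 6) * (x * (ρ⁻¹ * Real.exp (-x / ρ))))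
      = (I1 / 6) * ρ := by
    rw [MeasureTheory.integral_const_mul, xExpDens_total ρ hρ]
  have t2 : (∫ x in Set.Ioi (0:ℝ), (ρ / 6) * (min x K * (ρ⁻¹ * Real.exp (-x / ρ))))
      = (ρ / 6) * I1 := by
    rw [MeasureTheory.integral_const_mul, ← hI1]
  have t3 : (∫ x in Set.Ioi (0:ℝ), (-(I2 / 3)) * (ρ⁻¹ * Real.exp (-x / ρ)))
      = -(I2 / 3) := by
    rw [MeasureTheory.integral_const_mul, expDens_total ρ hρ, mul_one]
  have t4 : (∫ x in Set.Ioi (0:ℝ), (-(1/3) : ℝ) * (x * min x K * (ρ⁻¹ * Real.exp (-x / ρ))))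
      = (-(1/3) : ℝ) * I2 := by
    rw [MeasureTheory.integral_const_mul, ← hI2]
  rw [MeasureTheory.integral_add g123 g4,
      MeasureTheory.integral_add g12 g3,
      MeasureTheory.integral_add g1 g2, t1, t2, t3, t4]
  ring
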